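/- Let c₀, …, c₈ be nonzero complex numbers and c₉, c₁₀, c₁₁, c₁₂ complex numbers. Then the system consisting of the four sign-deformed Ptolemy equations c₉c₈ + c₂c₆ − c₄c₇ = 0, c₁₀c₅ + c₁c₃ − c₀c₄ = 0, c₁₁c₇ − c₂c₀ − c₃c₉ = 0, c₁₂c₄ + c₁c₆ − c₉c₁₀ = 0, together with the identification equations c₁ = c₀, c₂ = c₁, c₃ = c₂, c₁₂ = c₃, c₁₀ = c₄, c₆ = c₅, c₁₁ = c₆, c₉ = c₇, −c₀ = c₈, holds if and only if there exist c ∈ ℂ with c ≠ 0 and α ∈ ℂ with α³ + α² + α − 1 = 0 such that (c₀, c₁, c₂, c₃, c₄, c₅, c₆, c₇, c₈) = c·(1, 1, 1, 1, α, −α−α², −α−α², −α, −1) and c₉ = c₇, c₁₀ = c₄, c₁₁ = c₆, c₁₂ = c₃. -/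

import Mathlib

private lemma m036_aux (a x y z : ℂ) (ha : a ≠ 0)
    (e2 : x * y + a * a - a * x = 0)
    (e3 : y * z - a * a - a * z = 0)
    (e4 : a * x + a * y - z * x = 0) :
    ∃ α : ℂ, α ^ 3 + α ^ 2 + α - 1 = 0 ∧ x = a * α ∧
      y = a * (-α - α ^ 2) ∧ z = a * (-α) := by
  have key : (z + x) * (y - a) = 0 := by linear_combination e3 + e2
  have hya : y - a ≠ 0 := by
    intro h
    apply ha
    have h2 : a * a = 0 := by linear_combination e2 - x * h
    exact mul_self_eq_zero.mp h2
  have h74 : z = -x := by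
    rcases mul_eq_zero.mp key with h | h
    · linear_combination h
    · exact absurd h hya
  subst h74
  have hc : x ^ 3 + a * x ^ 2 + a ^ 2 * x - a ^ 3 = 0 := by
    linear_combination x * e4 - a * e2
  refine ⟨x / a, ?_, ?_, ?_, ?_⟩
  · field_simp
    first
    | linear_combination hc
    | linear_combination a ^ 3 * hc
  · field_simp
    try ring
  · field_simp
    first
    | linear_combination a * e4
    | linear_combination e4
  · field_simp
    try ring

/-- Solutions of the sign-deformed Ptolemy + gluing equations for the layered
triangulation of m036 (boundary obstruction class covering geometric lifts). -/
theorem m036_sign_deformed_ptolemy_solutions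
    (c0 c1 c2 c3 c4 c5 c6 c7 c8 : ℂ) (c9 c10 c11 c12 : ℂ)
    (h0 : c0 ≠ 0) (h1 : c1 ≠ 0) (h2 : c2 ≠ 0) (h3 : c3 ≠ 0) (h4 : c4 ≠ 0)
    (h5 : c5 ≠ 0) (h6 : c6 ≠ 0) (h7 : c7 ≠ 0) (h8 : c8 ≠ 0) :
    (c9 * c8 + c2 * c6 - c4 * c7 = 0 ∧
     c10 * c5 + c1 * c3 - c0 * c4 = 0 ∧
     c11 * c7 - c2 * c0 - c3 * c9 = 0 ∧
     c12 * c4 + c1 * c6 - c9 * c10 = 0 ∧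
     c1 = c0 ∧ c2 = c1 ∧ c3 = c2 ∧ c12 = c3 ∧ c10 = c4 ∧
     c6 = c5 ∧ c11 = c6 ∧ c9 = c7 ∧ -c0 = c8) ↔
    (∃ c α : ℂ, c ≠ 0 ∧ α ^ 3 + α ^ 2 + α - 1 = 0 ∧
     c0 = c * 1 ∧ c1 = c * 1 ∧ c2 = c * 1 ∧ c3 = c * 1 ∧
     c4 = c * α ∧ c5 = c * (-α - α ^ 2) ∧ c6 = c * (-α - α ^ 2) ∧
     c7 = c * (-α) ∧ c8 = c * (-1) ∧
     c9 = c7 ∧ c10 = c4 ∧ c11 = c6 ∧ c12 = c3) := by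
  constructor
  · rintro ⟨e1, e2, e3, e4, g1, g2, g3, g4, g5, g6, g7, g8, g9⟩
    have e2' : c4 * c5 + c0 * c0 - c0 * c4 = 0 := by
      rw [g5, g3, g2, g1] at e2; exact e2
    have e3' : c5 * c7 - c0 * c0 - c0 * c7 = 0 := by
      rw [g7, g6, g3, g2, g1, g8] at e3; exact e3
    have e4' : c0 * c4 + c0 * c5 - c7 * c4 = 0 := by
      rw [g4, g3, g2, g1, g6, g8, g5] at e4; exact e4
    obtain ⟨α, hα, hx, hy, hz⟩ := m036_aux c0 c4 c5 c7 h0 e2' e3' e4'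
    exact ⟨c0, α, h0, hα, by ring, by rw [g1]; ring, by rw [g2, g1]; ring,
      by rw [g3, g2, g1]; ring, hx, hy, by rw [g6]; exact hy, hz,
      by rw [← g9]; ring, g8, g5, g7, g4⟩
  · rintro ⟨c, α, hc, ha, k0, k1, k2, k3, k4, k5, k6, k7, k8, k9, k10, k11, k12⟩
    subst k0 k1 k2 k3 k4 k5 k6 k7 k8 k9 k10 k11 k12
    refine ⟨by ring, by linear_combination (-c^2) * ha, by linear_combination (c^2) * ha,
      by ring, rfl, rfl, rfl, rfl, rfl, rfl, rfl, rfl, by ring⟩
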